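/- There is no set of 9 or more points in PG(5,2) such that every plane (projective dimension 2, i.e., 3-dimensional linear subspace of F_2^6) contains at most 3 of the points, and there exists such a set of size 8; hence m_2^{(2)}(6,3) = 8. -/

import Mathlib

open Module

namespace Stmt13Aux

abbrev V6 := Fin 6 → ZMod 2

lemma zmod2_cases : ∀ x : ZMod 2, x = 0 ∨ x = 1 := by decide

lemma zmod2_not_one : ∀ x : ZMod 2, ¬ x = 1 ↔ x = 0 := by decide

lemma vneg_eq (x : V6) : -x = x := by
  funext i
  exact (by decide : ∀ a : ZMod 2, -a = a) (x i)

lemma mem_span_singleton_iff {v w : V6} (h : w ∈ Submodule.span (ZMod 2) {v}) :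
    w = 0 ∨ w = v := by
  rcases Submodule.mem_span_singleton.1 h with ⟨c, rfl⟩
  rcases zmod2_cases c with rfl | rfl
  · left; simp
  · right; simp

lemma span_injective {v w : V6} (hv : v ≠ 0) (h : Submodule.span (ZMod 2) {v} = Submodule.span (ZMod 2) {w}) :
    v = w := by
  have hm : v ∈ Submodule.span (ZMod 2) {w} := h ▸ Submodule.mem_span_singleton_self v
  rcases mem_span_singleton_iff hm with h0 | h1
  · exact absurd h0 hv
  · exact h1

lemma indep_of_sums (w : Fin 4 → V6)
    (h : ∀ s : Finset (Fin 4), s.Nonempty → ∑ i ∈ s, w i ≠ 0) :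
    LinearIndependent (ZMod 2) w := by
  rw [Fintype.linearIndependent_iff]
  intro g hg
  by_contra hne
  push_neg at hne
  obtain ⟨i, hi⟩ := hne
  classical
  have hsum : ∑ j ∈ Finset.univ.filter (fun j => g j = 1), w j = ∑ j : Fin 4, g j • w j := by
    rw [Finset.sum_filter]
    refine Finset.sum_congr rfl fun j _ => ?_
    rcases zmod2_cases (g j) with h0 | h0 <;> simp [h0]
  have hone : g i = 1 := (zmod2_cases (g i)).resolve_left hi
  have hne' : (Finset.univ.filter (fun j => g j = 1)).Nonempty :=
    ⟨i, Finset.mem_filter.2 ⟨Finset.mem_univ i, hone⟩⟩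
  exact h _ hne' (hsum.trans hg)

lemma exists_ext (W : Submodule (ZMod 2) V6) (h : finrank (ZMod 2) W ≤ 3) :
    ∃ S, W ≤ S ∧ finrank (ZMod 2) S = 3 := by
  suffices H : ∀ k (W : Submodule (ZMod 2) V6), finrank (ZMod 2) W + k = 3 →
      ∃ S, W ≤ S ∧ finrank (ZMod 2) S = 3 by
    exact H (3 - finrank (ZMod 2) W) W (by omega)
  intro k
  induction k with
  | zero => exact fun W hW => ⟨W, le_rfl, by omega⟩
  | succ k ih =>
    intro W hW
    have hW3 : finrank (ZMod 2) W < 3 := by omega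
    have hV6 : finrank (ZMod 2) V6 = 6 := Module.finrank_fin_fun _
    have hWne : W ≠ ⊤ := by
      intro hT
      rw [hT, finrank_top, hV6] at hW3
      omega
    obtain ⟨x, -, hx⟩ := SetLike.exists_of_lt (lt_top_iff_ne_top.2 hWne : W < ⊤)
    have hx0 : x ≠ 0 := fun h0 => hx (h0 ▸ W.zero_mem)
    have hdisj : Submodule.span (ZMod 2) {x} ⊓ W = ⊥ := by
      rw [eq_bot_iff]
      intro y hy
      rw [Submodule.mem_inf] at hy
      rcases mem_span_singleton_iff hy.1 with rfl | rfl
      · simp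
      · exact absurd hy.2 hx
    have hfr : finrank (ZMod 2) ↥(Submodule.span (ZMod 2) {x} ⊔ W) = finrank (ZMod 2) W + 1 := by
      have h2 := Submodule.finrank_sup_add_finrank_inf_eq (Submodule.span (ZMod 2) {x}) W
      rw [hdisj, finrank_bot, finrank_span_singleton hx0] at h2
      omega
    obtain ⟨S, h1, h2⟩ := ih (Submodule.span (ZMod 2) {x} ⊔ W) (by omega)
    exact ⟨S, le_trans le_sup_right h1, h2⟩


def u : Fin 8 → V6 :=
  ![![1,0,0,0,0,0], ![0,1,0,0,0,0], ![0,0,1,0,0,0], ![0,0,0,1,0,0], ![0,0,0,0,1,0],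
    ![0,0,0,0,0,1], ![1,1,1,1,0,0], ![1,1,0,0,1,1]]

lemma u_ne_zero : ∀ i, u i ≠ 0 := by decide

lemma u_inj : Function.Injective u := by decide

set_option maxRecDepth 10000 in
lemma u_sums : ∀ s : Finset (Fin 8), s.card ≤ 4 → s.Nonempty → ∑ i ∈ s, u i ≠ 0 := by decide


lemma part1 : ∃ A : Set (Submodule (ZMod 2) (Fin 6 → ZMod 2)),
      (∀ P ∈ A, finrank (ZMod 2) P = 1) ∧ A.ncard = 8 ∧
      ∀ S : Submodule (ZMod 2) (Fin 6 → ZMod 2), finrank (ZMod 2) S = 3 →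
        {P ∈ A | P ≤ S}.ncard ≤ 3 := by
  classical
  set f : Fin 8 → Submodule (ZMod 2) V6 := fun i => Submodule.span (ZMod 2) {u i} with hf
  have hfinj : Function.Injective f := by
    intro a b hab
    exact u_inj (span_injective (u_ne_zero a) hab)
  refine ⟨↑(Finset.univ.image f), ?_, ?_, ?_⟩
  · rintro P hP
    rw [Finset.coe_image, Set.mem_image] at hP
    obtain ⟨i, -, rfl⟩ := hP
    exact finrank_span_singleton (u_ne_zero i)
  · rw [Set.ncard_coe_finset, Finset.card_image_of_injective _ hfinj, Finset.card_univ,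
      Fintype.card_fin]
  · intro S hS
    have hset : {P ∈ (↑(Finset.univ.image f) : Set (Submodule (ZMod 2) V6)) | P ≤ S}
        = ↑((Finset.univ.filter fun i => f i ≤ S).image f) := by
      ext P
      simp only [Finset.coe_image, Set.mem_image, Set.mem_setOf_eq, Finset.mem_coe,
        Finset.coe_filter, Finset.mem_univ, true_and, Set.mem_setOf_eq]
      aesop
    rw [hset, Set.ncard_coe_finset]
    by_contra hgt
    push_neg at hgt
    rw [Finset.card_image_of_injective _ hfinj] at hgt
    obtain ⟨t, htsub, htcard⟩ := Finset.exists_subset_card_eq (show 4 ≤ (Finset.univ.filter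
      fun i => f i ≤ S).card by omega)
    have htc : Fintype.card ↥t = 4 := by rw [Fintype.card_coe, htcard]
    let e := (Fintype.equivFinOfCardEq htc).symm
    set w : Fin 4 → V6 := fun i => u ↑(e i) with hw
    have hwind : LinearIndependent (ZMod 2) w := by
      apply indep_of_sums
      intro s hs
      have hinj : Set.InjOn (fun i => (↑(e i) : Fin 8)) ↑s :=
        fun a _ b _ hab => e.injective (Subtype.ext hab)
      simp only [hw]
      rw [show ∑ i ∈ s, u ↑(e i) = ∑ j ∈ s.image (fun i => (↑(e i) : Fin 8)), u j from
        (Finset.sum_image (fun a ha b hb hab => hinj ha hb hab)).symm]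
      apply u_sums
      · exact le_trans Finset.card_image_le (le_trans (Finset.card_le_univ s) (by simp))
      · exact hs.image _
    have hrange : Submodule.span (ZMod 2) (Set.range w) ≤ S := by
      rw [Submodule.span_le]
      rintro _ ⟨i, rfl⟩
      have hmem : (↑(e i) : Fin 8) ∈ Finset.univ.filter (fun i => f i ≤ S) := htsub (e i).2
      have hle : f ↑(e i) ≤ S := (Finset.mem_filter.1 hmem).2
      rw [hf] at hle
      exact hle (Submodule.mem_span_singleton_self _)
    have h4 : finrank (ZMod 2) (Submodule.span (ZMod 2) (Set.range w)) = 4 := by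
      rw [finrank_span_eq_card hwind, Fintype.card_fin]
    have hmono := Submodule.finrank_mono hrange
    rw [h4, hS] at hmono
    omega


lemma arith (a b k se so st : ℕ) (hOE : b ≤ a) (hEO : b + a = k) (hK8 : 8 ≤ k) (hE1 : 1 ≤ a)
    (hsE : 6 * (a - 1) ≤ se) (hsO : 5 * b ≤ so) (hsplit : so + se = st)
    (hupper : 2 * st ≤ 9 * k) : False := by omega

lemma part2 : ∀ A : Set (Submodule (ZMod 2) (Fin 6 → ZMod 2)),
      (∀ P ∈ A, finrank (ZMod 2) P = 1) →
      (∀ S : Submodule (ZMod 2) (Fin 6 → ZMod 2), finrank (ZMod 2) S = 3 →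
        {P ∈ A | P ≤ S}.ncard ≤ 3) →
      A.ncard ≤ 8 := by
  classical
  intro A hA1 hA3
  by_contra hcard
  push_neg at hcard
  have hfin : A.Finite := by
    by_contra hinf
    rw [Set.Infinite.ncard hinf] at hcard
    omega
  rw [Set.ncard_eq_toFinset_card _ hfin] at hcard
  obtain ⟨t9, ht9sub, ht9card⟩ := Finset.exists_subset_card_eq (show 9 ≤ hfin.toFinset.card by omega)
  have htc : Fintype.card ↥t9 = 9 := by rw [Fintype.card_coe, ht9card]
  let e := (Fintype.equivFinOfCardEq htc).symm
  set P : Fin 9 → Submodule (ZMod 2) V6 := fun k => ↑(e k) with hP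
  have hPA : ∀ k, P k ∈ A := fun k => hfin.mem_toFinset.1 (ht9sub (e k).2)
  have hPinj : Function.Injective P := fun a b h => e.injective (Subtype.ext h)
  -- choose a nonzero vector spanning each point
  have hv : ∀ k, ∃ w : V6, w ≠ 0 ∧ P k = Submodule.span (ZMod 2) {w} := by
    intro k
    have h1 : finrank (ZMod 2) (P k) = 1 := hA1 _ (hPA k)
    rw [finrank_eq_one_iff'] at h1
    obtain ⟨⟨x, hxP⟩, hx0, hgen⟩ := h1
    refine ⟨x, fun h0 => hx0 (Subtype.ext h0), le_antisymm ?_ ?_⟩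
    · intro y hy
      obtain ⟨c, hc⟩ := hgen ⟨y, hy⟩
      have hcx : c • x = y := congrArg Subtype.val hc
      exact hcx ▸ Submodule.smul_mem _ c (Submodule.mem_span_singleton_self x)
    · intro y hy
      rcases mem_span_singleton_iff hy with rfl | rfl
      · exact (P k).zero_mem
      · exact hxP
  choose v hv0 hvP using hv
  have hvinj : Function.Injective v := fun a b h => hPinj (by rw [hvP, hvP, h])
  -- key property: no nonempty subset of ≤ 4 of the v's sums to zero
  have hQ : ∀ s : Finset (Fin 9), s.Nonempty → s.card ≤ 4 → ∑ i ∈ s, v i ≠ 0 := by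
    intro s hne hcard4 hsum0
    obtain ⟨j, hj⟩ := hne
    obtain ⟨t, hst, htcard⟩ := Finset.exists_superset_card_eq hcard4 (by simp)
    set W := Submodule.span (ZMod 2) (↑((t.erase j).image v) : Set V6) with hW
    have hWrank : finrank (ZMod 2) W ≤ 3 := by
      calc finrank (ZMod 2) W ≤ ((t.erase j).image v).card := finrank_span_finset_le_card _
      _ ≤ (t.erase j).card := Finset.card_image_le
      _ = 3 := by rw [Finset.card_erase_of_mem (hst hj), htcard]
    have hmem : ∀ i ∈ t, v i ∈ W := by
      intro i hi
      by_cases hij : i = j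
      · subst hij
        have h2 : v i = ∑ l ∈ s.erase i, v l := by
          have h1 : v i + ∑ l ∈ s.erase i, v l = 0 := by
            rw [Finset.add_sum_erase _ v hj]; exact hsum0
          have h3 := neg_eq_of_add_eq_zero_right h1
          rw [← h3, vneg_eq]
        rw [h2]
        refine Submodule.sum_mem _ fun l hl => Submodule.subset_span ?_
        refine Finset.mem_coe.2 (Finset.mem_image.2 ⟨l, ?_, rfl⟩)
        exact Finset.erase_subset_erase _ hst hl
      · exact Submodule.subset_span (Finset.mem_coe.2 (Finset.mem_image.2
          ⟨i, Finset.mem_erase.2 ⟨hij, hi⟩, rfl⟩))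
    obtain ⟨S, hWS, hS3⟩ := exists_ext W hWrank
    have hle3 := hA3 S hS3
    have himage : ((fun i => Submodule.span (ZMod 2) {v i}) '' ↑t) ⊆ {P ∈ A | P ≤ S} := by
      rintro _ ⟨i, hi, rfl⟩
      refine ⟨?_, ?_⟩
      · show Submodule.span (ZMod 2) {v i} ∈ A
        rw [← hvP i]; exact hPA i
      · show Submodule.span (ZMod 2) {v i} ≤ S
        rw [Submodule.span_singleton_le_iff_mem]
        exact hWS (hmem i hi)
    have hspaninj : Function.Injective (fun i => Submodule.span (ZMod 2) {v i}) := by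
      intro a b hab
      apply hPinj
      rw [hvP, hvP]
      exact hab
    have h4 : ((fun i => Submodule.span (ZMod 2) {v i}) '' ↑t).ncard = 4 := by
      rw [Set.ncard_image_of_injective _ hspaninj, Set.ncard_coe_finset, htcard]
    have hfin' : {P ∈ A | P ≤ S}.Finite := hfin.subset (Set.sep_subset _ _)
    have hle4 := Set.ncard_le_ncard himage hfin'
    rw [h4] at hle4
    exact absurd (le_trans hle4 hle3) (by omega)
  -- the linear map and its kernel
  set Tlin : (Fin 9 → ZMod 2) →ₗ[ZMod 2] V6 :=
    { toFun := fun c => ∑ i, c i • v i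
      map_add' := by intro a b; simp [add_smul, Finset.sum_add_distrib]
      map_smul' := by intro m a; simp [Finset.smul_sum, mul_smul] } with hTlin
  have hker8 : 8 ≤ Fintype.card ↥(LinearMap.ker Tlin) := by
    have hrn := LinearMap.finrank_range_add_finrank_ker Tlin
    rw [Module.finrank_fin_fun] at hrn
    have hr6 : finrank (ZMod 2) (LinearMap.range Tlin) ≤ 6 := by
      have h := Submodule.finrank_le (LinearMap.range Tlin)
      rwa [Module.finrank_fin_fun] at h
    have h3 : 3 ≤ finrank (ZMod 2) (LinearMap.ker Tlin) := by omega
    calc (8 : ℕ) = 2 ^ 3 := rfl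
    _ ≤ 2 ^ finrank (ZMod 2) (LinearMap.ker Tlin) := Nat.pow_le_pow_right (by norm_num) h3
    _ = Fintype.card (ZMod 2) ^ finrank (ZMod 2) (LinearMap.ker Tlin) := by rw [ZMod.card]
    _ = Fintype.card ↥(LinearMap.ker Tlin) := (card_eq_pow_finrank (K := ZMod 2)).symm
  set K : Finset (Fin 9 → ZMod 2) := Finset.univ.filter (fun c => c ∈ LinearMap.ker Tlin) with hK
  have hKcard : 8 ≤ K.card := by
    have hcs : Fintype.card ↥(LinearMap.ker Tlin) = K.card := by
      rw [hK]
      exact Fintype.card_subtype _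
    omega
  -- weight function
  set Wt : (Fin 9 → ZMod 2) → ℕ := fun c => (Finset.univ.filter (fun i => c i = 1)).card with hWt
  -- weight of kernel elements is ≥ 5
  have hsupp : ∀ c : Fin 9 → ZMod 2, c ∈ K → ∑ i ∈ Finset.univ.filter (fun i => c i = 1), v i = 0 := by
    intro c hc
    have hker : Tlin c = 0 := (Finset.mem_filter.1 hc).2
    have : ∑ i ∈ Finset.univ.filter (fun i => c i = 1), v i = ∑ i, c i • v i := by
      rw [Finset.sum_filter]
      refine Finset.sum_congr rfl fun i _ => ?_
      rcases zmod2_cases (c i) with h0 | h0 <;> simp [h0]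
    rw [this]
    exact hker
  have hwt5 : ∀ c ∈ K, c ≠ 0 → 5 ≤ Wt c := by
    intro c hc hc0
    by_contra hlt
    push_neg at hlt
    have hne : (Finset.univ.filter (fun i => c i = 1)).Nonempty := by
      rw [Finset.filter_nonempty_iff]
      by_contra hall
      push_neg at hall
      apply hc0
      funext i
      exact (zmod2_not_one _).1 (hall i (Finset.mem_univ i))
    simp only [hWt] at hlt
    exact hQ _ hne (by omega) (hsupp c hc)
  -- column injection bound
  have hcol : ∀ (p : (Fin 9 → ZMod 2) → ZMod 2), (∀ a b, p (a + b) = p a + p b) →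
      (K.filter (fun c => p c = 1)).card ≤ (K.filter (fun c => ¬ p c = 1)).card := by
    intro p hp
    rcases (K.filter (fun c => p c = 1)).eq_empty_or_nonempty with he | ⟨c0, hc0⟩
    · simp [he]
    · have hc0' := Finset.mem_filter.1 hc0
      apply Finset.card_le_card_of_injOn (fun c => c + c0)
      · intro a ha
        have ha' := Finset.mem_filter.1 ha
        rw [Finset.mem_coe, Finset.mem_filter]
        refine ⟨?_, ?_⟩
        · rw [hK, Finset.mem_filter]
          refine ⟨Finset.mem_univ _, ?_⟩
          have h1 : a ∈ LinearMap.ker Tlin := (Finset.mem_filter.1 ha'.1).2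
          have h2 : c0 ∈ LinearMap.ker Tlin := (Finset.mem_filter.1 hc0'.1).2
          exact Submodule.add_mem _ h1 h2
        · rw [hp, ha'.2, hc0'.2]
          decide
      · intro a _ b _ hab
        exact add_right_cancel hab
  have hcolbound : ∀ i : Fin 9, 2 * (K.filter (fun c => c i = 1)).card ≤ K.card := by
    intro i
    have h1 := hcol (fun c => c i) (fun a b => rfl)
    have h2 := Finset.card_filter_add_card_filter_not (s := K) (fun c => c i = 1)
    generalize (K.filter (fun c => c i = 1)).card = x at *
    generalize (K.filter (fun c => ¬ c i = 1)).card = y at *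
    omega
  -- parity
  set Esum := K.filter (fun c => ¬ (∑ i, c i) = 1) with hE
  set Osum := K.filter (fun c => (∑ i, c i) = 1) with hO
  have hOE : Osum.card ≤ Esum.card :=
    hcol (fun c => ∑ i, c i) (fun a b => by simp [Finset.sum_add_distrib])
  have hEO : Osum.card + Esum.card = K.card :=
    Finset.card_filter_add_card_filter_not (s := K) (fun c => (∑ i, c i) = 1)
  have h0K : (0 : Fin 9 → ZMod 2) ∈ K := by
    rw [hK, Finset.mem_filter]
    exact ⟨Finset.mem_univ _, Submodule.zero_mem _⟩
  have h0E : (0 : Fin 9 → ZMod 2) ∈ Esum := by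
    rw [hE, Finset.mem_filter]
    exact ⟨h0K, by simp⟩
  -- parity determines weight parity
  have hcast : ∀ c : Fin 9 → ZMod 2, (∑ i, c i) = (Wt c : ZMod 2) := by
    intro c
    rw [hWt]
    calc ∑ i, c i = ∑ i ∈ Finset.univ.filter (fun i => c i = 1), c i := by
          rw [Finset.sum_filter]
          refine Finset.sum_congr rfl fun i _ => ?_
          rcases zmod2_cases (c i) with h0 | h0 <;> simp [h0]
    _ = ∑ _i ∈ Finset.univ.filter (fun i => c i = 1), (1 : ZMod 2) :=
          Finset.sum_congr rfl fun i hi => (Finset.mem_filter.1 hi).2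
    _ = ((Finset.univ.filter (fun i => c i = 1)).card : ZMod 2) := by
          rw [Finset.sum_const, nsmul_eq_mul, mul_one]
  have hwE : ∀ c ∈ Esum.erase 0, 6 ≤ Wt c := by
    intro c hc
    obtain ⟨hc0, hcE⟩ := Finset.mem_erase.1 hc
    obtain ⟨hcK, hcp⟩ := Finset.mem_filter.1 hcE
    have h5 := hwt5 c hcK hc0
    have heven : (2 : ℕ) ∣ Wt c := by
      have hz : ((Wt c : ℕ) : ZMod 2) = 0 := by
        rw [← hcast]
        exact (zmod2_not_one _).1 hcp
      exact (ZMod.natCast_eq_zero_iff _ 2).1 hz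
    omega
  have hwO : ∀ c ∈ Osum, 5 ≤ Wt c := by
    intro c hc
    obtain ⟨hcK, hcp⟩ := Finset.mem_filter.1 hc
    refine hwt5 c hcK ?_
    intro h0
    rw [h0] at hcp
    simp at hcp
  -- sum bounds
  have hsumE : 6 * (Esum.card - 1) ≤ ∑ c ∈ Esum, Wt c := by
    have h1 : ∑ c ∈ Esum.erase 0, Wt c + Wt 0 = ∑ c ∈ Esum, Wt c :=
      Finset.sum_erase_add _ _ h0E
    have h2 : (Esum.erase 0).card • 6 ≤ ∑ c ∈ Esum.erase 0, Wt c :=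
      Finset.card_nsmul_le_sum _ _ _ hwE
    have h3 : (Esum.erase 0).card = Esum.card - 1 := Finset.card_erase_of_mem h0E
    have h4 : Wt 0 = 0 := by
      rw [hWt]
      simp
    rw [h3, smul_eq_mul] at h2
    omega
  have hsumO : 5 * Osum.card ≤ ∑ c ∈ Osum, Wt c := by
    have h2 : Osum.card • 5 ≤ ∑ c ∈ Osum, Wt c := Finset.card_nsmul_le_sum _ _ _ hwO
    rwa [smul_eq_mul, mul_comm] at h2
  have hsplit : ∑ c ∈ Osum, Wt c + ∑ c ∈ Esum, Wt c = ∑ c ∈ K, Wt c :=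
    Finset.sum_filter_add_sum_filter_not _ _ _
  -- double counting
  have hdouble : ∑ c ∈ K, Wt c = ∑ i : Fin 9, (K.filter (fun c => c i = 1)).card := by
    calc ∑ c ∈ K, Wt c = ∑ c ∈ K, ∑ i : Fin 9, (if c i = 1 then 1 else 0) := by
          refine Finset.sum_congr rfl fun c _ => ?_
          simp only [hWt, Finset.card_filter]
    _ = ∑ i : Fin 9, ∑ c ∈ K, (if c i = 1 then 1 else 0) := Finset.sum_comm
    _ = ∑ i : Fin 9, (K.filter (fun c => c i = 1)).card := by
          refine Finset.sum_congr rfl fun i _ => (Finset.card_filter _ _).symm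
  have hupper : 2 * ∑ c ∈ K, Wt c ≤ 9 * K.card := by
    rw [hdouble, Finset.mul_sum]
    calc ∑ i : Fin 9, 2 * (K.filter (fun c => c i = 1)).card ≤ ∑ _i : Fin 9, K.card :=
          Finset.sum_le_sum fun i _ => hcolbound i
    _ = 9 * K.card := by rw [Finset.sum_const, smul_eq_mul, Finset.card_univ, Fintype.card_fin]
  have hE1 : 1 ≤ Esum.card := Finset.card_pos.2 ⟨0, h0E⟩
  exact arith _ _ _ _ _ _ hOE hEO hKcard hE1 hsumE hsumO hsplit hupper


end Stmt13Aux

/-- `m_2^{(2)}(6,3) = 8`: there is a set of 8 points in `PG(5,2)` such that every plane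
(3-dimensional linear subspace of `F_2^6`) contains at most 3 of them, and there is no such
set with 9 or more points. -/
theorem stmt13 :
    (∃ A : Set (Submodule (ZMod 2) (Fin 6 → ZMod 2)),
      (∀ P ∈ A, finrank (ZMod 2) P = 1) ∧ A.ncard = 8 ∧
      ∀ S : Submodule (ZMod 2) (Fin 6 → ZMod 2), finrank (ZMod 2) S = 3 →
        {P ∈ A | P ≤ S}.ncard ≤ 3) ∧
    (∀ A : Set (Submodule (ZMod 2) (Fin 6 → ZMod 2)),
      (∀ P ∈ A, finrank (ZMod 2) P = 1) →
      (∀ S : Submodule (ZMod 2) (Fin 6 → ZMod 2), finrank (ZMod 2) S = 3 →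
        {P ∈ A | P ≤ S}.ncard ≤ 3) →
      A.ncard ≤ 8) := by
  exact ⟨Stmt13Aux.part1, Stmt13Aux.part2⟩
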